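/- Let X be the solution of the recursive distributional equation X =_d √U·X + √U·(1−√U), and let f be the version of its Lebesgue density satisfying the integral equation f(t) = 2·∫_{2√t−1}^{t} g(x,t)·f(x) dx + ∫_{t}^{1} (g(x,t) − 1)·f(x) dx for all t ∈ [0,1] and f = 0 outside [0,1], where g(x,t) := (1+x)/√((1+x)² − 4t). Then for every ε with 0 < ε < 1, f is Hölder continuous on [0, 1−ε] with exponent 1/2: for all 0 ≤ s < t ≤ 1−ε, |f(t) − f(s)| ≤ (9 + 6·ε^{−3/2})·‖f‖_∞·√(t−s), where ‖f‖_∞ := sup_{t ∈ ℝ} f(t). -/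

import Mathlib

open MeasureTheory

noncomputable section

/-- The uniform distribution on `[0,1]`. -/
def unif : Measure ℝ := volume.restrict (Set.Icc 0 1)

/-- The map `(x, u) ↦ √u·x + √u·(1 − √u)`. -/
def rdeMap (q : ℝ × ℝ) : ℝ :=
  Real.sqrt q.2 * q.1 + Real.sqrt q.2 * (1 - Real.sqrt q.2)

/-- `μ` is a (probability) solution of the recursive distributional equation
`X =_d √U·X + √U·(1 − √U)` with `X, U` independent and `U` uniform on `[0,1]`. -/
def IsRDESolution (μ : Measure ℝ) : Prop :=
  IsProbabilityMeasure μ ∧ Measure.map rdeMap (μ.prod unif) = μ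

/-- The function `g(x,t) = (1+x)/√((1+x)² − 4t)`. -/
def gdens (x t : ℝ) : ℝ := (1 + x) / Real.sqrt ((1 + x) ^ 2 - 4 * t)

/-- `f` is the version of the Lebesgue density of `μ` which vanishes outside `[0,1]` and
satisfies the integral equation
`f(t) = 2·∫_{2√t−1}^{t} g(x,t)·f(x) dx + ∫_{t}^{1} (g(x,t) − 1)·f(x) dx` on `[0,1]`. -/
def IsRDEDensity (μ : Measure ℝ) (f : ℝ → ℝ) : Prop :=
  Measurable f ∧ (∀ t, 0 ≤ f t) ∧
  μ = volume.withDensity (fun t => ENNReal.ofReal (f t)) ∧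
  (∀ t : ℝ, t < 0 ∨ 1 < t → f t = 0) ∧
  ∀ t ∈ Set.Icc (0 : ℝ) 1,
    f t = 2 * (∫ x in (2 * Real.sqrt t - 1)..t, gdens x t * f x)
          + ∫ x in t..(1 : ℝ), (gdens x t - 1) * f x

section AuxiliaryLemmas
open Set

lemma sqrt_sub_sqrt_le (A B : ℝ) : Real.sqrt A - Real.sqrt B ≤ Real.sqrt (A - B) := by
  rcases le_total A B with h | h
  · have := Real.sqrt_le_sqrt h
    have := Real.sqrt_nonneg (A - B)
    linarith
  · rcases le_total B 0 with hB | hB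
    · rw [Real.sqrt_eq_zero'.mpr hB]
      have := Real.sqrt_le_sqrt (by linarith : A ≤ A - B)
      linarith
    · have h1 : Real.sqrt A ≤ Real.sqrt B + Real.sqrt (A - B) := by
        have hs : Real.sqrt A ≤ Real.sqrt ((Real.sqrt B + Real.sqrt (A - B)) ^ 2) := by
          apply Real.sqrt_le_sqrt
          have e1 := Real.sq_sqrt hB
          have e2 := Real.sq_sqrt (by linarith : (0:ℝ) ≤ A - B)
          have e3 := Real.sqrt_nonneg B
          have e4 := Real.sqrt_nonneg (A - B)
          nlinarith
        rwa [Real.sqrt_sq (by positivity)] at hs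
      linarith

lemma sqrt_add_sub_sqrt_le {A c : ℝ} (hA : 0 < A) (hc : 0 ≤ c) :
    Real.sqrt (A + c) - Real.sqrt A ≤ c / (2 * Real.sqrt A) := by
  have hsA : 0 < Real.sqrt A := Real.sqrt_pos.mpr hA
  have h1 : Real.sqrt (A + c) ≤ Real.sqrt A + c / (2 * Real.sqrt A) := by
    have hs : Real.sqrt (A + c) ≤ Real.sqrt ((Real.sqrt A + c / (2 * Real.sqrt A)) ^ 2) := by
      apply Real.sqrt_le_sqrt
      have e1 := Real.sq_sqrt hA.le
      have h2 : (0:ℝ) ≤ (c / (2 * Real.sqrt A))^2 := sq_nonneg _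
      have h3 : Real.sqrt A * (c / (2 * Real.sqrt A)) = c / 2 := by
        field_simp
      nlinarith
    rwa [Real.sqrt_sq (by positivity)] at hs
  linarith

lemma gdens_nonneg {x : ℝ} (t : ℝ) (hx : -1 ≤ x) : 0 ≤ gdens x t :=
  div_nonneg (by linarith) (Real.sqrt_nonneg _)

lemma gdens_eq_zero {x t : ℝ} (ht : 0 ≤ t) (hx : -1 ≤ x) (hxt : x ≤ 2 * Real.sqrt t - 1) :
    gdens x t = 0 := by
  have h1 : (1 + x) ^ 2 - 4 * t ≤ 0 := by
    have h2 : 0 ≤ 1 + x := by linarith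
    have h3 : 1 + x ≤ 2 * Real.sqrt t := by linarith
    have h4 := Real.sq_sqrt ht
    nlinarith
  rw [gdens, Real.sqrt_eq_zero'.mpr h1, div_zero]

lemma gdens_mono {x s t : ℝ} (hst : s ≤ t) (hx : -1 ≤ x) (hD : 0 < (1 + x) ^ 2 - 4 * t) :
    gdens x s ≤ gdens x t := by
  unfold gdens
  have h1 : Real.sqrt ((1+x)^2 - 4*t) ≤ Real.sqrt ((1+x)^2 - 4*s) :=
    Real.sqrt_le_sqrt (by linarith)
  exact div_le_div_of_nonneg_left (by linarith) (Real.sqrt_pos.mpr hD) h1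

lemma one_le_gdens {x t : ℝ} (ht : 0 ≤ t) (hx : -1 ≤ x) (hD : 0 < (1 + x) ^ 2 - 4 * t) :
    1 ≤ gdens x t := by
  unfold gdens
  rw [le_div_iff₀ (Real.sqrt_pos.mpr hD), one_mul]
  calc Real.sqrt ((1+x)^2 - 4*t) ≤ Real.sqrt ((1+x)^2) := Real.sqrt_le_sqrt (by linarith)
    _ = 1 + x := by rw [Real.sqrt_sq (by linarith)]

lemma measurable_gdens_x (r : ℝ) : Measurable (fun x => gdens x r) := by
  unfold gdens
  exact (measurable_const.add measurable_id').div
    (((measurable_id'.const_add 1).pow_const 2 |>.sub measurable_const).sqrt)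

/-- core integrability, interval to the right of the singularity -/
lemma intervalIntegrable_gdens_core {r c d : ℝ} (hr : 0 ≤ r)
    (hc : 2 * Real.sqrt r - 1 ≤ c) (hm1 : -1 ≤ c) (hcd : c ≤ d) :
    IntervalIntegrable (fun x => gdens x r) volume c d := by
  have hdom : IntervalIntegrable (fun x => Real.sqrt (1 + d) * (x - c) ^ (-(1:ℝ)/2)) volume c d := by
    have h0 : IntervalIntegrable (fun x => (x : ℝ) ^ (-(1:ℝ)/2)) volume (c - c) (d - c) :=
      intervalIntegral.intervalIntegrable_rpow' (by norm_num)
    have h1 := (h0.comp_sub_right c)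
    simp only [sub_add_cancel] at h1
    exact h1.const_mul _
  apply hdom.mono_fun (measurable_gdens_x r).aestronglyMeasurable
  rw [Set.uIoc_of_le hcd]
  refine MeasureTheory.ae_restrict_of_forall_mem measurableSet_Ioc ?_
  intro x hx
  obtain ⟨hxc, hxd⟩ := hx
  have hx1 : (0:ℝ) < 1 + x := by linarith
  have hxc0 : (0:ℝ) < x - c := by linarith
  have hrc : 2 * Real.sqrt r ≤ 1 + c := by linarith
  have h4r : 4 * r ≤ (1 + c)^2 := by nlinarith [Real.sq_sqrt hr, Real.sqrt_nonneg r]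
  have hD : (x - c) * (1 + x) ≤ (1 + x)^2 - 4*r := by nlinarith
  have hkey : gdens x r ≤ Real.sqrt (1 + d) * (x - c) ^ (-(1:ℝ)/2) := by
    have h2 : Real.sqrt ((x-c)*(1+x)) ≤ Real.sqrt ((1+x)^2 - 4*r) := Real.sqrt_le_sqrt hD
    have hprodpos : 0 < Real.sqrt ((x-c)*(1+x)) := Real.sqrt_pos.mpr (by positivity)
    have step1 : gdens x r ≤ (1+x) / Real.sqrt ((x-c)*(1+x)) :=
      div_le_div_of_nonneg_left (by linarith) hprodpos h2
    have e : Real.sqrt (1+x) * Real.sqrt (1+x) = 1+x := Real.mul_self_sqrt hx1.le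
    have step2 : (1+x) / Real.sqrt ((x-c)*(1+x)) = Real.sqrt (1+x) / Real.sqrt (x-c) := by
      rw [Real.sqrt_mul hxc0.le]
      rw [div_eq_div_iff (by positivity) (Real.sqrt_pos.mpr hxc0).ne']
      linear_combination (-(Real.sqrt (x-c))) * (Real.sq_sqrt hx1.le)
    have step3 : Real.sqrt (1+x) / Real.sqrt (x-c) ≤ Real.sqrt (1+d) / Real.sqrt (x-c) := by
      gcongr
    have step4 : Real.sqrt (1+d) / Real.sqrt (x-c) = Real.sqrt (1+d) * (x-c) ^ (-(1:ℝ)/2) := by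
      rw [show (-(1:ℝ)/2) = -(1/2 : ℝ) by norm_num, Real.rpow_neg hxc0.le,
        ← Real.sqrt_eq_rpow, div_eq_mul_inv]
    rw [← step4]
    calc gdens x r ≤ (1+x) / Real.sqrt ((x-c)*(1+x)) := step1
      _ = Real.sqrt (1+x) / Real.sqrt (x-c) := step2
      _ ≤ Real.sqrt (1+d) / Real.sqrt (x-c) := step3
  simp only [Real.norm_eq_abs]
  rw [abs_of_nonneg (gdens_nonneg r (by linarith)),
    abs_of_nonneg (mul_nonneg (Real.sqrt_nonneg _) (Real.rpow_nonneg hxc0.le _))]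
  exact hkey

lemma continuous_G (r : ℝ) : Continuous (fun x : ℝ => Real.sqrt ((1+x)^2 - 4*r)) := by
  apply Real.continuous_sqrt.comp
  continuity

lemma integral_gdens_core {r c d : ℝ} (hr : 0 ≤ r)
    (hc : 2 * Real.sqrt r - 1 ≤ c) (hm1 : -1 ≤ c) (hcd : c ≤ d) :
    ∫ x in c..d, gdens x r
      = Real.sqrt ((1+d)^2 - 4*r) - Real.sqrt ((1+c)^2 - 4*r) := by
  apply intervalIntegral.integral_eq_sub_of_hasDeriv_right_of_le hcd
    ((continuous_G r).continuousOn)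
  · intro x hx
    obtain ⟨hx1, hx2⟩ := hx
    have hDpos : 0 < (1+x)^2 - 4*r := by
      nlinarith [Real.sq_sqrt hr, Real.sqrt_nonneg r]
    have hpoly : HasDerivAt (fun y : ℝ => (1+y)^2 - 4*r) (2*(1+x)) x := by
      have h := (((hasDerivAt_id x).const_add (1:ℝ)).pow 2).sub_const (4*r)
      refine h.congr_deriv ?_
      simp
    have hsq := (Real.hasDerivAt_sqrt (ne_of_gt hDpos)).comp x hpoly
    have heq : 2*(1+x) / (2 * Real.sqrt ((1+x)^2 - 4*r)) = gdens x r := by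
      rw [gdens]
      have hs : Real.sqrt ((1+x)^2 - 4*r) ≠ 0 := ne_of_gt (Real.sqrt_pos.mpr hDpos)
      field_simp
    have : HasDerivAt (fun y : ℝ => Real.sqrt ((1+y)^2 - 4*r)) (gdens x r) x := by
      rw [← heq]
      refine hsq.congr_deriv ?_
      ring
    exact this.hasDerivWithinAt
  · exact intervalIntegrable_gdens_core hr hc hm1 hcd

lemma sqrt_at_sing {r x : ℝ} (hr : 0 ≤ r) (hm1 : -1 ≤ x) (hx : x ≤ 2 * Real.sqrt r - 1) :
    Real.sqrt ((1+x)^2 - 4*r) = 0 := by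
  apply Real.sqrt_eq_zero'.mpr
  nlinarith [Real.sq_sqrt hr, Real.sqrt_nonneg r]

lemma intervalIntegrable_gdens {r c d : ℝ} (hr : 0 ≤ r) (hm1 : -1 ≤ c) (hcd : c ≤ d) :
    IntervalIntegrable (fun x => gdens x r) volume c d := by
  set a := 2 * Real.sqrt r - 1 with ha
  have ham1 : -1 ≤ a := by nlinarith [Real.sqrt_nonneg r]
  rcases le_or_gt a c with h | h
  · exact intervalIntegrable_gdens_core hr h hm1 hcd
  · have hzero : ∀ e, c ≤ e → e ≤ a → IntervalIntegrable (fun x => gdens x r) volume c e := by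
      intro e hce he
      apply (intervalIntegrable_const (c := (0:ℝ))).mono_fun
        (measurable_gdens_x r).aestronglyMeasurable
      rw [Set.uIoc_of_le hce]
      refine MeasureTheory.ae_restrict_of_forall_mem measurableSet_Ioc ?_
      intro x hx
      have hx1 : -1 ≤ x := by linarith [hx.1]
      have hx2 : x ≤ 2 * Real.sqrt r - 1 := by linarith [hx.2, he, ha.le]
      simp [gdens_eq_zero hr hx1 hx2]
    rcases le_or_gt d a with hda | hda
    · exact hzero d hcd hda
    · exact (hzero a h.le le_rfl).trans (intervalIntegrable_gdens_core hr le_rfl ham1 hda.le)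

lemma integral_gdens {r c d : ℝ} (hr : 0 ≤ r) (hm1 : -1 ≤ c) (hcd : c ≤ d) :
    ∫ x in c..d, gdens x r
      = Real.sqrt ((1+d)^2 - 4*r) - Real.sqrt ((1+c)^2 - 4*r) := by
  set a := 2 * Real.sqrt r - 1 with ha
  have ham1 : -1 ≤ a := by nlinarith [Real.sqrt_nonneg r]
  rcases le_or_gt a c with h | h
  · exact integral_gdens_core hr h hm1 hcd
  · have hc0 : Real.sqrt ((1+c)^2 - 4*r) = 0 := sqrt_at_sing hr hm1 h.le
    rcases le_or_gt d a with hda | hda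
    · have hd0 : Real.sqrt ((1+d)^2 - 4*r) = 0 := sqrt_at_sing hr (by linarith) hda
      rw [hc0, hd0, sub_zero]
      rw [intervalIntegral.integral_congr (g := fun _ => (0:ℝ))]
      · simp
      · intro x hx
        rw [Set.uIcc_of_le hcd] at hx
        exact gdens_eq_zero hr (by linarith [hx.1]) (by linarith [hx.2])
    · have h1 : IntervalIntegrable (fun x => gdens x r) volume c a :=
        intervalIntegrable_gdens hr hm1 h.le
      have h2 : IntervalIntegrable (fun x => gdens x r) volume a d :=
        intervalIntegrable_gdens_core hr le_rfl ham1 hda.le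
      rw [← intervalIntegral.integral_add_adjacent_intervals h1 h2]
      have e1 : ∫ x in c..a, gdens x r = 0 := by
        rw [intervalIntegral.integral_congr (g := fun _ => (0:ℝ))]
        · simp
        · intro x hx
          rw [Set.uIcc_of_le h.le] at hx
          exact gdens_eq_zero hr (by linarith [hx.1]) hx.2
      have e2 := integral_gdens_core hr le_rfl ham1 hda.le
      have ha0 : Real.sqrt ((1+a)^2 - 4*r) = 0 := sqrt_at_sing hr ham1 le_rfl
      rw [e1, e2, ha0, hc0]
      ring

def hker (t x : ℝ) : ℝ := 2 / Real.sqrt (x - (2 * Real.sqrt t - 1))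

lemma hker_nonneg (t x : ℝ) : 0 ≤ hker t x :=
  div_nonneg (by norm_num) (Real.sqrt_nonneg _)

lemma measurable_hker : Measurable (Function.uncurry hker) := by
  unfold Function.uncurry hker
  exact measurable_const.div
    ((measurable_snd.sub ((measurable_fst.sqrt.const_mul 2).sub
      measurable_const)).sqrt)

lemma measurable_hker_right (t : ℝ) : Measurable (fun x => hker t x) := by
  unfold hker
  exact measurable_const.div ((measurable_id'.sub measurable_const).sqrt)

lemma gdens_le_hker {t x : ℝ} (ht : 0 ≤ t) (hx : 0 ≤ x) (hx1 : x ≤ 1) :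
    gdens x t ≤ hker t x := by
  set u := x - (2 * Real.sqrt t - 1) with hu
  rcases le_or_gt ((1+x)^2 - 4*t) 0 with hD | hD
  · rw [gdens, Real.sqrt_eq_zero'.mpr hD, div_zero]
    exact hker_nonneg t x
  · have hst := Real.sq_sqrt ht
    have hst' := Real.sqrt_nonneg t
    have hupos : 0 < u := by nlinarith
    have hDu : u ≤ (1+x)^2 - 4*t := by nlinarith
    have h1 : Real.sqrt u ≤ Real.sqrt ((1+x)^2 - 4*t) := Real.sqrt_le_sqrt hDu
    have h2 : gdens x t ≤ 2 / Real.sqrt ((1+x)^2 - 4*t) := by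
      unfold gdens
      exact (div_le_div_iff_of_pos_right (Real.sqrt_pos.mpr hD)).mpr (by linarith)
    refine h2.trans ?_
    rw [hker, ← hu]
    exact div_le_div_of_nonneg_left (by norm_num) (Real.sqrt_pos.mpr hupos) h1

lemma hker_le_flip {x y : ℝ} (hx : 0 ≤ x) (hx1 : x ≤ 1) (hy : 0 ≤ y) (hy1 : y ≤ 1) :
    hker x y ≤ 2 / Real.sqrt (((1+y)/2)^2 - x) := by
  set w := ((1+y)/2)^2 with hw
  have hw0 : 0 ≤ w := sq_nonneg _
  have hsw : Real.sqrt w = (1+y)/2 := Real.sqrt_sq (by linarith)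
  have hsx := Real.sq_sqrt hx
  have hsxn := Real.sqrt_nonneg x
  have hux : x = Real.sqrt x ^ 2 := hsx.symm
  have hsx1 : Real.sqrt x ≤ 1 := by
    rw [show (1:ℝ) = Real.sqrt 1 by simp]
    exact Real.sqrt_le_sqrt hx1
  set u := y - (2 * Real.sqrt x - 1) with hu
  have hkey : u = 2 * (Real.sqrt w - Real.sqrt x) := by
    rw [hsw]; ring
  rcases le_or_gt (w - x) 0 with hv | hv
  · have hwx : Real.sqrt w ≤ Real.sqrt x := Real.sqrt_le_sqrt (by linarith)
    have hu0 : u ≤ 0 := by rw [hkey]; linarith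
    rw [hker, ← hu, Real.sqrt_eq_zero'.mpr hu0, div_zero]
    exact div_nonneg (by norm_num) (Real.sqrt_nonneg _)
  · have hswx : Real.sqrt x < Real.sqrt w := by
      have := Real.sqrt_lt_sqrt hx (by linarith : x < w)
      exact this
    have hprod : (Real.sqrt w - Real.sqrt x) * (Real.sqrt w + Real.sqrt x) = w - x := by
      have := Real.sq_sqrt hw0
      nlinarith
    have hsum : Real.sqrt w + Real.sqrt x ≤ 2 := by
      rw [hsw]; linarith
    have huv : w - x ≤ u := by
      rw [hkey]
      nlinarith
    have h1 : Real.sqrt (w - x) ≤ Real.sqrt u := Real.sqrt_le_sqrt huv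
    rw [hker, ← hu]
    exact div_le_div_of_nonneg_left (by norm_num) (Real.sqrt_pos.mpr hv) h1

lemma lint_inv_sqrt_left {c d : ℝ} (h : c ≤ d) :
    ∫⁻ x in Set.Ioc c d, ENNReal.ofReal (2 / Real.sqrt (x - c))
      = ENNReal.ofReal (4 * Real.sqrt (d - c)) := by
  have hrpow : IntervalIntegrable (fun x => 2 * (x - c) ^ (-(1:ℝ)/2)) volume c d := by
    have h0 : IntervalIntegrable (fun x => (x:ℝ) ^ (-(1:ℝ)/2)) volume (c - c) (d - c) :=
      intervalIntegral.intervalIntegrable_rpow' (by norm_num)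
    have h1 := h0.comp_sub_right c
    simp only [sub_add_cancel] at h1
    exact h1.const_mul 2
  have hEq : ∀ x ∈ Set.Ioc c d, 2 / Real.sqrt (x - c) = 2 * (x - c) ^ (-(1:ℝ)/2) := by
    intro x hx
    have hxc : 0 < x - c := by linarith [hx.1]
    rw [show (-(1:ℝ)/2) = -(1/2 : ℝ) by norm_num, Real.rpow_neg hxc.le,
      ← Real.sqrt_eq_rpow, div_eq_mul_inv]
  have hIntOn : IntegrableOn (fun x => 2 / Real.sqrt (x - c)) (Set.Ioc c d) volume := by
    apply (((intervalIntegrable_iff_integrableOn_Ioc_of_le h).1 hrpow)).congr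
    refine MeasureTheory.ae_restrict_of_forall_mem measurableSet_Ioc ?_
    intro x hx
    exact (hEq x hx).symm
  rw [← ofReal_integral_eq_lintegral_ofReal hIntOn
    (MeasureTheory.ae_restrict_of_forall_mem measurableSet_Ioc
      (fun x _ => div_nonneg (by norm_num) (Real.sqrt_nonneg _)))]
  congr 1
  rw [← intervalIntegral.integral_of_le h]
  rw [intervalIntegral.integral_congr_ae (g := fun x => 2 * (x - c) ^ (-(1:ℝ)/2))
    (Filter.Eventually.of_forall (fun x hx => hEq x (by rwa [Set.uIoc_of_le h] at hx)))]
  rw [intervalIntegral.integral_const_mul]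
  have hcomp := intervalIntegral.integral_comp_sub_right (a := c) (b := d)
    (fun x => (x:ℝ) ^ (-(1:ℝ)/2)) c
  rw [hcomp, sub_self]
  rw [integral_rpow (Or.inl (by norm_num))]
  rw [Real.zero_rpow (by norm_num), Real.sqrt_eq_rpow]
  norm_num
  ring

lemma lint_inv_sqrt_right {c d : ℝ} (h : c ≤ d) :
    ∫⁻ x in Set.Ioc c d, ENNReal.ofReal (2 / Real.sqrt (d - x))
      = ENNReal.ofReal (4 * Real.sqrt (d - c)) := by
  have hrpow : IntervalIntegrable (fun x => 2 * (d - x) ^ (-(1:ℝ)/2)) volume c d := by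
    have h0 : IntervalIntegrable (fun x => (x:ℝ) ^ (-(1:ℝ)/2)) volume (d - d) (d - c) :=
      intervalIntegral.intervalIntegrable_rpow' (by norm_num)
    have h1 := h0.comp_sub_left d
    simp only [sub_sub_cancel] at h1
    exact (h1.const_mul 2).symm
  have hEq : ∀ x : ℝ, x ≤ d → 2 / Real.sqrt (d - x) = 2 * (d - x) ^ (-(1:ℝ)/2) := by
    intro x hx
    rcases lt_or_eq_of_le hx with h' | h'
    · have hpos : (0:ℝ) < d - x := by linarith
      rw [show (-(1:ℝ)/2) = -(1/2 : ℝ) by norm_num, Real.rpow_neg hpos.le,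
        ← Real.sqrt_eq_rpow, div_eq_mul_inv]
    · subst h'
      simp [Real.zero_rpow (show (-(1:ℝ)/2) ≠ 0 by norm_num)]
  have hIntOn : IntegrableOn (fun x => 2 / Real.sqrt (d - x)) (Set.Ioc c d) volume := by
    apply ((intervalIntegrable_iff_integrableOn_Ioc_of_le h).1 hrpow).congr
    refine MeasureTheory.ae_restrict_of_forall_mem measurableSet_Ioc ?_
    intro x hx
    exact (hEq x hx.2).symm
  rw [← ofReal_integral_eq_lintegral_ofReal hIntOn
    (MeasureTheory.ae_restrict_of_forall_mem measurableSet_Ioc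
      (fun x _ => div_nonneg (by norm_num) (Real.sqrt_nonneg _)))]
  congr 1
  rw [← intervalIntegral.integral_of_le h]
  rw [intervalIntegral.integral_congr_ae
    (Filter.Eventually.of_forall (fun x hx => hEq x (by
      rw [Set.uIoc_of_le h] at hx; exact hx.2)))]
  rw [intervalIntegral.integral_const_mul]
  rw [intervalIntegral.integral_comp_sub_left (fun x => (x:ℝ) ^ (-(1:ℝ)/2)) d, sub_self]
  rw [integral_rpow (Or.inl (by norm_num))]
  rw [Real.zero_rpow (by norm_num), Real.sqrt_eq_rpow]
  norm_num
  ring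

lemma measurable_Ffac (c : ℝ) : Measurable (fun x : ℝ => ENNReal.ofReal (2 / Real.sqrt (x - c))) :=
  ((measurable_id'.sub_const c).sqrt.const_div 2).ennreal_ofReal

lemma measurable_Ffac' (w : ℝ) : Measurable (fun x : ℝ => ENNReal.ofReal (2 / Real.sqrt (w - x))) :=
  ((measurable_const.sub measurable_id').sqrt.const_div 2).ennreal_ofReal

lemma ker_bound (c w : ℝ) :
    ∫⁻ x in Set.Icc (0:ℝ) 1,
        ENNReal.ofReal (2 / Real.sqrt (x - c)) * ENNReal.ofReal (2 / Real.sqrt (w - x)) ≤ 16 := by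
  set F := fun x : ℝ => ENNReal.ofReal (2 / Real.sqrt (x - c)) * ENNReal.ofReal (2 / Real.sqrt (w - x)) with hF
  have hFmeas : Measurable F := (measurable_Ffac c).mul (measurable_Ffac' w)
  have hF0 : ∀ x : ℝ, x ∉ Set.Ioo c w → F x = 0 := by
    intro x hx
    rw [Set.mem_Ioo, not_and_or] at hx
    rcases hx with hx | hx
    · push_neg at hx
      have h0 : Real.sqrt (x - c) = 0 := Real.sqrt_eq_zero'.mpr (by linarith)
      simp [hF, h0]
    · push_neg at hx
      have h0 : Real.sqrt (w - x) = 0 := Real.sqrt_eq_zero'.mpr (by linarith)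
      simp [hF, h0]
  rcases le_or_gt w c with hwc | hcw
  · have hz : ∀ x : ℝ, F x = 0 := by
      intro x
      apply hF0
      rw [Set.mem_Ioo]
      rintro ⟨h1, h2⟩
      linarith
    calc ∫⁻ x in Set.Icc (0:ℝ) 1, F x = 0 := by simp [hz]
      _ ≤ 16 := zero_le
  · set L := (w - c)/2 with hL
    have hLpos : 0 < L := by rw [hL]; linarith
    have hsL : 0 < Real.sqrt L := Real.sqrt_pos.mpr hLpos
    set m := c + L with hm
    have hcm : c ≤ m := by linarith
    have hmw : m ≤ w := by rw [hm, hL]; linarith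
    have hind : ∀ x : ℝ, F x ≤ (Set.Ioc c m).indicator F x + (Set.Ioc m w).indicator F x := by
      intro x
      rcases le_or_gt x c with h1 | h1
      · rw [hF0 x (by rw [Set.mem_Ioo]; rintro ⟨ha, hb⟩; linarith)]
        exact zero_le
      · rcases le_or_gt x m with h2 | h2
        · rw [Set.indicator_of_mem (Set.mem_Ioc.mpr ⟨h1, h2⟩)]
          exact le_add_right le_rfl
        · rcases le_or_gt x w with h3 | h3
          · rw [Set.indicator_of_mem (Set.mem_Ioc.mpr ⟨h2, h3⟩)]
            exact le_add_left le_rfl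
          · rw [hF0 x (by rw [Set.mem_Ioo]; rintro ⟨ha, hb⟩; linarith)]
            exact zero_le
    have hsplit : ∫⁻ x in Set.Icc (0:ℝ) 1, F x
        ≤ (∫⁻ x in Set.Ioc c m, F x) + ∫⁻ x in Set.Ioc m w, F x := by
      calc ∫⁻ x in Set.Icc (0:ℝ) 1, F x
          ≤ ∫⁻ x in Set.Icc (0:ℝ) 1, ((Set.Ioc c m).indicator F x + (Set.Ioc m w).indicator F x) :=
            MeasureTheory.lintegral_mono (fun x => hind x)
        _ ≤ ∫⁻ x, ((Set.Ioc c m).indicator F x + (Set.Ioc m w).indicator F x) :=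
            MeasureTheory.setLIntegral_le_lintegral _ _
        _ = (∫⁻ x, (Set.Ioc c m).indicator F x) + ∫⁻ x, (Set.Ioc m w).indicator F x := by
            exact MeasureTheory.lintegral_add_left (hFmeas.indicator measurableSet_Ioc) _
        _ = (∫⁻ x in Set.Ioc c m, F x) + ∫⁻ x in Set.Ioc m w, F x := by
            rw [MeasureTheory.lintegral_indicator measurableSet_Ioc F,
              MeasureTheory.lintegral_indicator measurableSet_Ioc F]
    have hpiece1 : ∫⁻ x in Set.Ioc c m, F x ≤ 8 := by
      have hmono : ∀ x ∈ Set.Ioc c m, F x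
          ≤ ENNReal.ofReal (2 / Real.sqrt (x - c)) * ENNReal.ofReal (2 / Real.sqrt L) := by
        intro x hx
        apply mul_le_mul_right
        apply ENNReal.ofReal_le_ofReal
        apply div_le_div_of_nonneg_left (by norm_num) hsL
        apply Real.sqrt_le_sqrt
        have := hx.2
        rw [hm] at this
        linarith
      calc ∫⁻ x in Set.Ioc c m, F x
          ≤ ∫⁻ x in Set.Ioc c m,
              ENNReal.ofReal (2 / Real.sqrt (x - c)) * ENNReal.ofReal (2 / Real.sqrt L) :=
            MeasureTheory.setLIntegral_mono ((measurable_Ffac c).mul_const _) hmono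
        _ = (∫⁻ x in Set.Ioc c m, ENNReal.ofReal (2 / Real.sqrt (x - c)))
              * ENNReal.ofReal (2 / Real.sqrt L) :=
            MeasureTheory.lintegral_mul_const' _ _ ENNReal.ofReal_ne_top
        _ = ENNReal.ofReal (4 * Real.sqrt L) * ENNReal.ofReal (2 / Real.sqrt L) := by
            rw [lint_inv_sqrt_left hcm, show m - c = L by ring]
        _ = ENNReal.ofReal 8 := by
            rw [← ENNReal.ofReal_mul (by positivity)]
            congr 1
            field_simp
            ring
        _ ≤ 8 := by
            norm_num
    have hpiece2 : ∫⁻ x in Set.Ioc m w, F x ≤ 8 := by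
      have hmono : ∀ x ∈ Set.Ioc m w, F x
          ≤ ENNReal.ofReal (2 / Real.sqrt L) * ENNReal.ofReal (2 / Real.sqrt (w - x)) := by
        intro x hx
        apply mul_le_mul_left
        apply ENNReal.ofReal_le_ofReal
        apply div_le_div_of_nonneg_left (by norm_num) hsL
        apply Real.sqrt_le_sqrt
        have := hx.1
        rw [hm] at this
        linarith
      calc ∫⁻ x in Set.Ioc m w, F x
          ≤ ∫⁻ x in Set.Ioc m w,
              ENNReal.ofReal (2 / Real.sqrt L) * ENNReal.ofReal (2 / Real.sqrt (w - x)) :=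
            MeasureTheory.setLIntegral_mono ((measurable_Ffac' w).const_mul _) hmono
        _ = ENNReal.ofReal (2 / Real.sqrt L)
              * ∫⁻ x in Set.Ioc m w, ENNReal.ofReal (2 / Real.sqrt (w - x)) :=
            MeasureTheory.lintegral_const_mul' _ _ ENNReal.ofReal_ne_top
        _ = ENNReal.ofReal (2 / Real.sqrt L) * ENNReal.ofReal (4 * Real.sqrt L) := by
            rw [lint_inv_sqrt_right hmw, show w - m = L by rw [hm, hL]; ring]
        _ = ENNReal.ofReal 8 := by
            rw [← ENNReal.ofReal_mul (by positivity)]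
            congr 1
            field_simp
            ring
        _ ≤ 8 := by
            norm_num
    calc ∫⁻ x in Set.Icc (0:ℝ) 1, F x
        ≤ (∫⁻ x in Set.Ioc c m, F x) + ∫⁻ x in Set.Ioc m w, F x := hsplit
      _ ≤ 8 + 8 := add_le_add hpiece1 hpiece2
      _ = 16 := by norm_num

lemma density_bound (f : ℝ → ℝ) (hmeas : Measurable f) (hpos : ∀ t, 0 ≤ f t)
    (hzero : ∀ t : ℝ, t < 0 ∨ 1 < t → f t = 0)
    (hone : ∫⁻ x, ENNReal.ofReal (f x) = 1)
    (heq : ∀ t ∈ Set.Icc (0:ℝ) 1,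
      f t = 2 * (∫ x in (2 * Real.sqrt t - 1)..t, gdens x t * f x)
          + ∫ x in t..(1:ℝ), (gdens x t - 1) * f x) :
    ∀ x, f x ≤ 144 := by
  set φ := fun x => ENNReal.ofReal (f x) with hφ
  have hφmeas : Measurable φ := hmeas.ennreal_ofReal
  have hfInt : Integrable f volume :=
    ⟨hmeas.aestronglyMeasurable,
      (hasFiniteIntegral_iff_ofReal (Filter.Eventually.of_forall hpos)).mpr
        (by rw [hone]; exact ENNReal.one_lt_top)⟩
  have hφle : ∫⁻ x in Set.Icc (0:ℝ) 1, φ x ≤ 1 := by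
    rw [← hone]; exact MeasureTheory.setLIntegral_le_lintegral _ _
  -- step 1
  have step1 : ∀ t ∈ Set.Icc (0:ℝ) 1,
      φ t ≤ 3 * ∫⁻ x in Set.Icc (0:ℝ) 1, ENNReal.ofReal (hker t x) * φ x := by
    rintro t ⟨ht0, ht1⟩
    set J := ∫⁻ x in Set.Icc (0:ℝ) 1, ENNReal.ofReal (hker t x) * φ x with hJ
    rcases eq_or_ne J ⊤ with htop | hfin
    · rw [htop]
      simp
    · have hhf_nonneg : ∀ x, 0 ≤ hker t x * f x :=
        fun x => mul_nonneg (hker_nonneg t x) (hpos x)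
      have hhfmeas : Measurable (fun x => hker t x * f x) :=
        (measurable_hker_right t).mul hmeas
      have hofReal : ∀ x, ENNReal.ofReal (hker t x * f x) = ENNReal.ofReal (hker t x) * φ x :=
        fun x => ENNReal.ofReal_mul (hker_nonneg t x)
      have hIntOn : IntegrableOn (fun x => hker t x * f x) (Set.Icc (0:ℝ) 1) volume := by
        refine ⟨hhfmeas.aestronglyMeasurable, ?_⟩
        rw [hasFiniteIntegral_iff_ofReal (Filter.Eventually.of_forall hhf_nonneg)]
        rw [lintegral_congr hofReal]
        exact lt_top_iff_ne_top.mpr hfin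
      set K := ∫ x in Set.Icc (0:ℝ) 1, hker t x * f x with hK
      have hKJ : ENNReal.ofReal K = J := by
        rw [hK, ofReal_integral_eq_lintegral_ofReal hIntOn
          (Filter.Eventually.of_forall hhf_nonneg)]
        exact lintegral_congr hofReal
      have hIndInt : Integrable ((Set.Icc (0:ℝ) 1).indicator (fun x => hker t x * f x)) volume :=
        (integrable_indicator_iff measurableSet_Icc).mpr hIntOn
      have hIndNonneg : ∀ x, 0 ≤ (Set.Icc (0:ℝ) 1).indicator (fun x => hker t x * f x) x :=
        fun x => Set.indicator_nonneg (fun y _ => hhf_nonneg y) x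
      have hIndK : ∫ x, (Set.Icc (0:ℝ) 1).indicator (fun x => hker t x * f x) x = K := by
        rw [MeasureTheory.integral_indicator measurableSet_Icc]
      have hat : 2 * Real.sqrt t - 1 ≤ t := by
        nlinarith [Real.sq_sqrt ht0, sq_nonneg (Real.sqrt t - 1)]
      have ham1 : (-1:ℝ) ≤ 2 * Real.sqrt t - 1 := by
        nlinarith [Real.sqrt_nonneg t]
      have hI1 : (∫ x in (2 * Real.sqrt t - 1)..t, gdens x t * f x) ≤ K := by
        rw [intervalIntegral.integral_of_le hat]
        have hptw : ∀ x ∈ Set.Ioc (2 * Real.sqrt t - 1) t, gdens x t * f x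
            ≤ (Set.Icc (0:ℝ) 1).indicator (fun x => hker t x * f x) x := by
          intro x hx
          rcases le_or_gt 0 x with hx0 | hx0
          · have hx1 : x ≤ 1 := le_trans hx.2 ht1
            rw [Set.indicator_of_mem (Set.mem_Icc.mpr ⟨hx0, hx1⟩)]
            exact mul_le_mul_of_nonneg_right (gdens_le_hker ht0 hx0 hx1) (hpos x)
          · rw [hzero x (Or.inl hx0), mul_zero]
            exact hIndNonneg x
        have hgfInt : IntegrableOn (fun x => gdens x t * f x)
            (Set.Ioc (2 * Real.sqrt t - 1) t) volume := by
          apply Integrable.mono' hIndInt.integrableOn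
            ((measurable_gdens_x t).mul hmeas).aestronglyMeasurable
          refine MeasureTheory.ae_restrict_of_forall_mem measurableSet_Ioc ?_
          intro x hx
          simp only [Real.norm_eq_abs, Pi.mul_apply]
          rw [abs_of_nonneg (mul_nonneg (gdens_nonneg t (by linarith [hx.1])) (hpos x))]
          exact hptw x hx
        calc ∫ x in Set.Ioc (2 * Real.sqrt t - 1) t, gdens x t * f x
            ≤ ∫ x in Set.Ioc (2 * Real.sqrt t - 1) t,
                (Set.Icc (0:ℝ) 1).indicator (fun x => hker t x * f x) x :=
              MeasureTheory.setIntegral_mono_on hgfInt hIndInt.integrableOn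
                measurableSet_Ioc hptw
          _ ≤ ∫ x, (Set.Icc (0:ℝ) 1).indicator (fun x => hker t x * f x) x :=
              MeasureTheory.setIntegral_le_integral hIndInt
                (Filter.Eventually.of_forall hIndNonneg)
          _ = K := hIndK
      have hI2 : (∫ x in t..(1:ℝ), (gdens x t - 1) * f x) ≤ K := by
        rw [intervalIntegral.integral_of_le ht1]
        have hptw : ∀ x ∈ Set.Ioc t 1, (gdens x t - 1) * f x
            ≤ (Set.Icc (0:ℝ) 1).indicator (fun x => hker t x * f x) x := by
          intro x hx
          have hx0 : 0 ≤ x := le_trans ht0 hx.1.le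
          have hx1 : x ≤ 1 := hx.2
          rw [Set.indicator_of_mem (Set.mem_Icc.mpr ⟨hx0, hx1⟩)]
          have h1 : (gdens x t - 1) * f x ≤ gdens x t * f x :=
            mul_le_mul_of_nonneg_right (by linarith) (hpos x)
          exact h1.trans (mul_le_mul_of_nonneg_right (gdens_le_hker ht0 hx0 hx1) (hpos x))
        have hgfInt : IntegrableOn (fun x => (gdens x t - 1) * f x) (Set.Ioc t 1) volume := by
          apply Integrable.mono' (hIndInt.add hfInt).integrableOn
            (((measurable_gdens_x t).sub measurable_const).mul hmeas).aestronglyMeasurable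
          refine MeasureTheory.ae_restrict_of_forall_mem measurableSet_Ioc ?_
          intro x hx
          have hx0 : 0 ≤ x := le_trans ht0 hx.1.le
          have hx1 : x ≤ 1 := hx.2
          simp only [Real.norm_eq_abs, Pi.mul_apply, Pi.sub_apply]
          rw [abs_mul, abs_of_nonneg (hpos x)]
          have hg0 : 0 ≤ gdens x t := gdens_nonneg t (by linarith)
          have habs : |gdens x t - 1| ≤ gdens x t + 1 := by
            rw [abs_le]; constructor <;> linarith
          have : |gdens x t - 1| * f x ≤ (gdens x t + 1) * f x :=
            mul_le_mul_of_nonneg_right habs (hpos x)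
          refine this.trans ?_
          rw [Pi.add_apply, Set.indicator_of_mem (Set.mem_Icc.mpr ⟨hx0, hx1⟩)]
          have h5 := mul_le_mul_of_nonneg_right (gdens_le_hker ht0 hx0 hx1) (hpos x)
          nlinarith [hpos x]
        calc ∫ x in Set.Ioc t 1, (gdens x t - 1) * f x
            ≤ ∫ x in Set.Ioc t 1,
                (Set.Icc (0:ℝ) 1).indicator (fun x => hker t x * f x) x :=
              MeasureTheory.setIntegral_mono_on hgfInt hIndInt.integrableOn
                measurableSet_Ioc hptw
          _ ≤ ∫ x, (Set.Icc (0:ℝ) 1).indicator (fun x => hker t x * f x) x :=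
              MeasureTheory.setIntegral_le_integral hIndInt
                (Filter.Eventually.of_forall hIndNonneg)
          _ = K := hIndK
      have hft : f t ≤ 3 * K := by
        rw [heq t ⟨ht0, ht1⟩]
        linarith
      calc φ t ≤ ENNReal.ofReal (3 * K) := ENNReal.ofReal_le_ofReal hft
        _ = ENNReal.ofReal 3 * ENNReal.ofReal K := ENNReal.ofReal_mul (by norm_num)
        _ = 3 * J := by rw [hKJ]; norm_num
  -- step 2 : the double-kernel bound
  have hHmeas : Measurable (Function.uncurry fun x y => ENNReal.ofReal (hker x y) * φ y) :=
    (measurable_hker.ennreal_ofReal).mul (hφmeas.comp measurable_snd)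
  have hinner_meas : Measurable (fun x => ∫⁻ y in Set.Icc (0:ℝ) 1, ENNReal.ofReal (hker x y) * φ y) :=
    Measurable.lintegral_prod_right hHmeas
  have step2 : ∀ t ∈ Set.Icc (0:ℝ) 1,
      (∫⁻ x in Set.Icc (0:ℝ) 1, ENNReal.ofReal (hker t x) * φ x) ≤ 48 := by
    rintro t ⟨ht0, ht1⟩
    calc ∫⁻ x in Set.Icc (0:ℝ) 1, ENNReal.ofReal (hker t x) * φ x
        ≤ ∫⁻ x in Set.Icc (0:ℝ) 1, ENNReal.ofReal (hker t x)
            * (3 * ∫⁻ y in Set.Icc (0:ℝ) 1, ENNReal.ofReal (hker x y) * φ y) := by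
          apply MeasureTheory.setLIntegral_mono
            ((measurable_hker_right t).ennreal_ofReal.mul (hinner_meas.const_mul 3))
          intro x hx
          exact mul_le_mul_right (step1 x hx) _
      _ = 3 * ∫⁻ x in Set.Icc (0:ℝ) 1, ∫⁻ y in Set.Icc (0:ℝ) 1,
            ENNReal.ofReal (hker t x) * (ENNReal.ofReal (hker x y) * φ y) := by
          rw [← MeasureTheory.lintegral_const_mul' 3 _ (by norm_num)]
          apply lintegral_congr
          intro x
          calc ENNReal.ofReal (hker t x)
                * (3 * ∫⁻ y in Set.Icc (0:ℝ) 1, ENNReal.ofReal (hker x y) * φ y)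
              = 3 * (ENNReal.ofReal (hker t x)
                  * ∫⁻ y in Set.Icc (0:ℝ) 1, ENNReal.ofReal (hker x y) * φ y) := by ring
            _ = 3 * ∫⁻ y in Set.Icc (0:ℝ) 1,
                  ENNReal.ofReal (hker t x) * (ENNReal.ofReal (hker x y) * φ y) := by
                rw [MeasureTheory.lintegral_const_mul' _ _ ENNReal.ofReal_ne_top]
      _ = 3 * ∫⁻ y in Set.Icc (0:ℝ) 1, ∫⁻ x in Set.Icc (0:ℝ) 1,
            ENNReal.ofReal (hker t x) * (ENNReal.ofReal (hker x y) * φ y) := by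
          congr 1
          apply MeasureTheory.lintegral_lintegral_swap
          apply Measurable.aemeasurable
          exact ((measurable_hker_right t).comp measurable_fst).ennreal_ofReal.mul
            ((measurable_hker.ennreal_ofReal).mul (hφmeas.comp measurable_snd))
      _ ≤ 3 * ∫⁻ y in Set.Icc (0:ℝ) 1, 16 * φ y := by
          apply mul_le_mul_right
          apply MeasureTheory.setLIntegral_mono (hφmeas.const_mul 16)
          intro y hy
          calc ∫⁻ x in Set.Icc (0:ℝ) 1,
                ENNReal.ofReal (hker t x) * (ENNReal.ofReal (hker x y) * φ y)
              = (∫⁻ x in Set.Icc (0:ℝ) 1,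
                  ENNReal.ofReal (hker t x) * ENNReal.ofReal (hker x y)) * φ y := by
                rw [← MeasureTheory.lintegral_mul_const' _ _ ENNReal.ofReal_ne_top]
                apply lintegral_congr
                intro x
                ring
            _ ≤ 16 * φ y := by
                apply mul_le_mul_left
                calc ∫⁻ x in Set.Icc (0:ℝ) 1, ENNReal.ofReal (hker t x) * ENNReal.ofReal (hker x y)
                    ≤ ∫⁻ x in Set.Icc (0:ℝ) 1,
                        ENNReal.ofReal (2 / Real.sqrt (x - (2 * Real.sqrt t - 1)))
                        * ENNReal.ofReal (2 / Real.sqrt (((1+y)/2)^2 - x)) := by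
                      apply MeasureTheory.setLIntegral_mono
                        ((measurable_Ffac _).mul (measurable_Ffac' _))
                      intro x hx
                      apply mul_le_mul'
                      · exact le_of_eq rfl
                      · exact ENNReal.ofReal_le_ofReal
                          (hker_le_flip hx.1 hx.2 hy.1 hy.2)
                  _ ≤ 16 := ker_bound _ _
      _ ≤ 3 * 16 := by
          apply mul_le_mul_right
          rw [MeasureTheory.lintegral_const_mul' 16 _ (by norm_num)]
          calc 16 * ∫⁻ y in Set.Icc (0:ℝ) 1, φ y ≤ 16 * 1 := mul_le_mul_right hφle _
            _ = 16 := by norm_num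
      _ = 48 := by norm_num
  -- conclude
  intro x
  rcases lt_or_ge x 0 with hx | hx
  · rw [hzero x (Or.inl hx)]; norm_num
  rcases le_or_gt x 1 with hx1 | hx1
  · have h1 : φ x ≤ 3 * 48 := le_trans (step1 x ⟨hx, hx1⟩)
      (mul_le_mul_right (step2 x ⟨hx, hx1⟩) 3)
    have h2 : φ x ≤ ENNReal.ofReal 144 := by
      refine h1.trans ?_
      rw [show (3 : ENNReal) * 48 = 144 by norm_num]
      simp
    exact (ENNReal.ofReal_le_ofReal_iff (by norm_num)).mp h2
  · rw [hzero x (Or.inr hx1)]; norm_num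


end AuxiliaryLemmas

set_option maxHeartbeats 1000000 in
/-- Hölder continuity with exponent `1/2` of the version `f` of the density of the RDE
solution satisfying the integral equation: for `0 < ε < 1` and `0 ≤ s < t ≤ 1 − ε`,
`|f(t) − f(s)| ≤ (9 + 6·ε^{−3/2})·‖f‖_∞·√(t − s)`, where `‖f‖_∞ = sup_{t ∈ ℝ} f(t)`. -/
theorem rde_density_holder (μ : Measure ℝ) (hμ : IsRDESolution μ)
    (f : ℝ → ℝ) (hf : IsRDEDensity μ f)
    (ε : ℝ) (hε0 : 0 < ε) (hε1 : ε < 1)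
    (s t : ℝ) (hs : 0 ≤ s) (hst : s < t) (ht : t ≤ 1 - ε) :
    |f t - f s| ≤ (9 + 6 * ε ^ (-(3 : ℝ) / 2)) * sSup (Set.range f) * Real.sqrt (t - s) := by
  obtain ⟨hprob, -⟩ := hμ
  obtain ⟨hmeas, hpos, hdens, hzero, heqn⟩ := hf
  have hone : ∫⁻ x, ENNReal.ofReal (f x) = 1 := by
    have h1 : μ Set.univ = 1 := hprob.measure_univ
    rw [hdens, MeasureTheory.withDensity_apply _ MeasurableSet.univ,
      MeasureTheory.setLIntegral_univ] at h1
    exact h1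
  have hbd : ∀ x, f x ≤ 144 := density_bound f hmeas hpos hzero hone heqn
  set M := sSup (Set.range f) with hM
  have hBdd : BddAbove (Set.range f) := ⟨144, by rintro y ⟨x, rfl⟩; exact hbd x⟩
  have hfM : ∀ x, f x ≤ M := fun x => le_csSup hBdd ⟨x, rfl⟩
  have hM0 : 0 ≤ M := le_trans (hpos 0) (hfM 0)
  have hfInt : Integrable f volume :=
    ⟨hmeas.aestronglyMeasurable,
      (hasFiniteIntegral_iff_ofReal (Filter.Eventually.of_forall hpos)).mpr
        (by rw [hone]; exact ENNReal.one_lt_top)⟩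
  -- numerics
  have ht0 : 0 < t := lt_of_le_of_lt hs hst
  have ht1 : t < 1 := by linarith only [ht, hε0]
  have hs1 : s < 1 := by linarith only [hst, ht, hε0]
  have hεt : ε ≤ 1 - t := by linarith only [ht]
  have hsqs := Real.sq_sqrt hs
  have hsqt := Real.sq_sqrt ht0.le
  have hsqsn := Real.sqrt_nonneg s
  have hsqtn := Real.sqrt_nonneg t
  set as := 2 * Real.sqrt s - 1 with has
  set at' := 2 * Real.sqrt t - 1 with hat
  have hasm1 : (-1:ℝ) ≤ as := by rw [has]; linarith only [hsqsn]
  have hatm1 : (-1:ℝ) ≤ at' := by rw [hat]; linarith only [hsqtn]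
  have has_s : as ≤ s := by rw [has]; nlinarith only [sq_nonneg (Real.sqrt s - 1), hsqs]
  have hat_t : at' ≤ t := by rw [hat]; nlinarith only [sq_nonneg (Real.sqrt t - 1), hsqt]
  have hsqst : Real.sqrt s ≤ Real.sqrt t := Real.sqrt_le_sqrt hst.le
  have has_at : as ≤ at' := by rw [has, hat]; linarith only [hsqst]
  set p := min at' s with hp
  have has_p : as ≤ p := le_min has_at has_s
  have hp_s : p ≤ s := min_le_right _ _
  have hp_at : p ≤ at' := min_le_left _ _
  have hpm1 : (-1:ℝ) ≤ p := le_trans hasm1 has_p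
  -- interval integrability helpers
  have hIIf : ∀ c d : ℝ, IntervalIntegrable f volume c d := fun c d => hfInt.intervalIntegrable
  have hInt_gf : ∀ (r c d : ℝ), 0 ≤ r → -1 ≤ c → c ≤ d →
      IntervalIntegrable (fun x => gdens x r * f x) volume c d := by
    intro r c d hr h1 h2
    apply ((intervalIntegrable_gdens hr h1 h2).const_mul M).mono_fun
      ((measurable_gdens_x r).mul hmeas).aestronglyMeasurable
    rw [Set.uIoc_of_le h2]
    refine MeasureTheory.ae_restrict_of_forall_mem measurableSet_Ioc ?_
    intro x hx
    have hxm1 : (-1:ℝ) ≤ x := by linarith only [hx.1, h1]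
    have hg := gdens_nonneg r hxm1
    simp only [Real.norm_eq_abs, Pi.mul_apply]
    rw [abs_of_nonneg (mul_nonneg hg (hpos x)), abs_of_nonneg (mul_nonneg hM0 hg)]
    calc gdens x r * f x ≤ gdens x r * M := mul_le_mul_of_nonneg_left (hfM x) hg
      _ = M * gdens x r := mul_comm _ _
  -- named integrals
  set X1 := ∫ x in as..s, gdens x t * f x with hX1
  set X2 := ∫ x in as..s, gdens x s * f x with hX2
  set Y1 := ∫ x in t..(1:ℝ), gdens x t * f x with hY1
  set Y2 := ∫ x in t..(1:ℝ), gdens x s * f x with hY2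
  set Z := ∫ x in t..(1:ℝ), f x with hZ
  set W := ∫ x in s..t, gdens x s * f x with hW
  set V := ∫ x in s..t, f x with hV
  set T2 := ∫ x in s..t, gdens x t * f x with hT2
  -- equations
  have heqt := heqn t ⟨ht0.le, ht1.le⟩
  have heqs := heqn s ⟨hs, hs1.le⟩
  simp only [sub_mul, one_mul] at heqt heqs
  rw [← hat] at heqt
  rw [← has] at heqs
  have hsum1 : (∫ x in at'..t, gdens x t * f x) = X1 + T2 := by
    have e0 : (∫ x in as..at', gdens x t * f x) = 0 := by
      rw [intervalIntegral.integral_congr (g := fun _ => (0:ℝ))]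
      · simp
      · intro x hx
        rw [Set.uIcc_of_le has_at] at hx
        show gdens x t * f x = 0
        rw [gdens_eq_zero ht0.le (by linarith only [hx.1, hasm1]) (by linarith only [hx.2, hat]), zero_mul]
    have adj1 := intervalIntegral.integral_add_adjacent_intervals
      (hInt_gf t as at' ht0.le hasm1 has_at) (hInt_gf t at' t ht0.le hatm1 hat_t)
    have adj2 := intervalIntegral.integral_add_adjacent_intervals
      (hInt_gf t as s ht0.le hasm1 has_s) (hInt_gf t s t ht0.le (by linarith only [hs]) hst.le)
    rw [e0, zero_add] at adj1
    rw [hX1, hT2]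
    linarith only [adj1, adj2]
  have hY1Z : (∫ x in t..(1:ℝ), (gdens x t * f x - f x)) = Y1 - Z :=
    intervalIntegral.integral_sub (hInt_gf t t 1 ht0.le (by linarith only [ht0]) ht1.le) (hIIf t 1)
  have hWV : (∫ x in s..t, (gdens x s * f x - f x)) = W - V :=
    intervalIntegral.integral_sub (hInt_gf s s t hs (by linarith only [hs]) hst.le) (hIIf s t)
  have hY2Z : (∫ x in t..(1:ℝ), (gdens x s * f x - f x)) = Y2 - Z :=
    intervalIntegral.integral_sub (hInt_gf s t 1 hs (by linarith only [ht0]) ht1.le) (hIIf t 1)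
  have hadjS := intervalIntegral.integral_add_adjacent_intervals
    ((hInt_gf s s t hs (by linarith only [hs]) hst.le).sub (hIIf s t))
    ((hInt_gf s t 1 hs (by linarith only [ht0]) ht1.le).sub (hIIf t 1))
  have hft : f t = 2 * (X1 + T2) + (Y1 - Z) := by
    rw [heqt, hsum1, hY1Z]
  have hfs : f s = 2 * X2 + ((W - V) + (Y2 - Z)) := by
    rw [heqs, ← hadjS, hWV, hY2Z, hX2]
  have hsplit : f t - f s = 2 * (X1 - X2) + 2 * T2 - (W - V) + (Y1 - Y2) := by
    rw [hft, hfs]; ring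
  -- kernel difference integral on [as, s]
  set S1 := Real.sqrt ((1+p)^2 - 4*s) with hS1d
  set S2 := Real.sqrt ((1+s)^2 - 4*t) with hS2d
  have habsII : IntervalIntegrable (fun x => |gdens x t - gdens x s|) volume as s :=
    ((intervalIntegrable_gdens ht0.le hasm1 has_s).sub
      (intervalIntegrable_gdens hs hasm1 has_s)).abs
  have hA1 : (∫ x in as..p, |gdens x t - gdens x s|) = S1 := by
    rw [intervalIntegral.integral_congr (g := fun x => gdens x s) ?_]
    · rw [integral_gdens hs hasm1 has_p]
      have hzero2 : (1 + as)^2 - 4*s = 0 := by rw [has]; linear_combination 4 * hsqs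
      rw [hzero2, Real.sqrt_zero, sub_zero, hS1d]
    · intro x hx
      rw [Set.uIcc_of_le has_p] at hx
      have hxm1 : (-1:ℝ) ≤ x := by linarith only [hx.1, hasm1]
      show |gdens x t - gdens x s| = gdens x s
      rw [gdens_eq_zero ht0.le hxm1 (by linarith only [hx.2, hp_at, hat]), zero_sub,
        abs_neg, abs_of_nonneg (gdens_nonneg s hxm1)]
  have hA2 : (∫ x in p..s, |gdens x t - gdens x s|) = S2 - (1 - s) + S1 := by
    have hcongr : ∀ᵐ x ∂(volume : Measure ℝ), x ∈ Set.uIoc p s →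
        |gdens x t - gdens x s| = gdens x t - gdens x s := by
      refine Filter.Eventually.of_forall ?_
      intro x hx
      rw [Set.uIoc_of_le hp_s] at hx
      rcases le_total at' s with hc | hc
      · have hpat : p = at' := min_eq_left hc
        have hxat : at' < x := by rw [← hpat]; exact hx.1
        have hD : 0 < (1+x)^2 - 4*t := by
          have h1 : 0 < 1+x-2*Real.sqrt t := by linarith only [hxat, hat]
          have h2 : 0 < 1+x+2*Real.sqrt t := by linarith only [hxat, hat, hsqtn]
          nlinarith only [mul_pos h1 h2, hsqt]
        exact abs_of_nonneg (sub_nonneg.mpr (gdens_mono hst.le (by linarith only [hxat, hatm1]) hD))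
      · exfalso
        have hps : p = s := min_eq_right hc
        rw [hps] at hx
        exact absurd hx.1 (not_lt.mpr hx.2)
    rw [intervalIntegral.integral_congr_ae hcongr,
      intervalIntegral.integral_sub (intervalIntegrable_gdens ht0.le hpm1 hp_s)
        (intervalIntegrable_gdens hs hpm1 hp_s),
      integral_gdens ht0.le hpm1 hp_s, integral_gdens hs hpm1 hp_s]
    have h0 : Real.sqrt ((1+p)^2 - 4*t) = 0 :=
      sqrt_at_sing ht0.le hpm1 (by rw [← hat]; exact hp_at)
    have h1s : Real.sqrt ((1+s)^2 - 4*s) = 1 - s := by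
      rw [show (1+s)^2 - 4*s = (1-s)^2 by ring, Real.sqrt_sq (by linarith only [hs1])]
    rw [h0, h1s, hS1d, hS2d]
    ring
  have hAsum : (∫ x in as..s, |gdens x t - gdens x s|) = S1 + (S2 - (1-s) + S1) := by
    have hm1 : IntervalIntegrable (fun x => |gdens x t - gdens x s|) volume as p :=
      habsII.mono_set (by
        rw [Set.uIcc_of_le has_p, Set.uIcc_of_le has_s]
        exact Set.Icc_subset_Icc le_rfl hp_s)
    have hm2 : IntervalIntegrable (fun x => |gdens x t - gdens x s|) volume p s :=
      habsII.mono_set (by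
        rw [Set.uIcc_of_le hp_s, Set.uIcc_of_le has_s]
        exact Set.Icc_subset_Icc has_p le_rfl)
    rw [← intervalIntegral.integral_add_adjacent_intervals hm1 hm2, hA1, hA2]
  -- sqrt facts
  have hsq0 : (0:ℝ) ≤ Real.sqrt (t-s) := Real.sqrt_nonneg _
  have h4 : Real.sqrt 4 = 2 := by
    rw [show (4:ℝ) = 2^2 by norm_num, Real.sqrt_sq (by norm_num)]
  have hsqrt4 : Real.sqrt (4*(t-s)) = 2 * Real.sqrt (t-s) := by
    rw [Real.sqrt_mul (by norm_num) _, h4]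
  have hS1le : S1 ≤ 2 * Real.sqrt (t - s) := by
    rcases le_total at' s with hc | hc
    · have hpat : p = at' := min_eq_left hc
      have harg : (1+p)^2 - 4*s = 4*(t-s) := by
        rw [hpat, hat]; linear_combination 4 * hsqt
      rw [hS1d, harg, hsqrt4]
    · have hps : p = s := min_eq_right hc
      have hval : S1 = 1 - s := by
        rw [hS1d, hps, show (1+s)^2 - 4*s = (1-s)^2 by ring, Real.sqrt_sq (by linarith only [hs1])]
      have hle : (1-s)^2 ≤ 4*(t-s) := by
        have h1 : 1+s ≤ 2*Real.sqrt t := by linarith only [hc, hat]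
        nlinarith only [mul_self_le_mul_self (show (0:ℝ) ≤ 1+s by linarith only [hs]) h1, hsqt]
      calc S1 = Real.sqrt ((1-s)^2) := by rw [hval, Real.sqrt_sq (by linarith only [hs1])]
        _ ≤ Real.sqrt (4*(t-s)) := Real.sqrt_le_sqrt hle
        _ = 2 * Real.sqrt (t-s) := hsqrt4
  have hS2le : S2 ≤ 1 - t := by
    rw [hS2d]
    calc Real.sqrt ((1+s)^2 - 4*t) ≤ Real.sqrt ((1+t)^2 - 4*t) :=
          Real.sqrt_le_sqrt (by nlinarith only [mul_self_le_mul_self (show (0:ℝ) ≤ 1+s by linarith only [hs]) (show (1:ℝ)+s ≤ 1+t by linarith only [hst])])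
      _ = 1 - t := by rw [show (1+t)^2 - 4*t = (1-t)^2 by ring, Real.sqrt_sq (by linarith only [ht1])]
  have hS20 : (0:ℝ) ≤ S2 := Real.sqrt_nonneg _
  -- T1 bound
  have hT1 : |X1 - X2| ≤ M * (S1 + (S2 - (1-s) + S1)) := by
    rw [hX1, hX2, ← intervalIntegral.integral_sub (hInt_gf t as s ht0.le hasm1 has_s)
      (hInt_gf s as s hs hasm1 has_s)]
    calc |∫ x in as..s, (gdens x t * f x - gdens x s * f x)|
        ≤ ∫ x in as..s, |gdens x t * f x - gdens x s * f x| :=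
          intervalIntegral.abs_integral_le_integral_abs has_s
      _ ≤ ∫ x in as..s, M * |gdens x t - gdens x s| := by
          apply intervalIntegral.integral_mono_on has_s
            (((hInt_gf t as s ht0.le hasm1 has_s).sub
              (hInt_gf s as s hs hasm1 has_s)).abs) (habsII.const_mul M)
          intro x hx
          have he : gdens x t * f x - gdens x s * f x = (gdens x t - gdens x s) * f x := by
            ring
          rw [he, abs_mul, abs_of_nonneg (hpos x)]
          calc |gdens x t - gdens x s| * f x ≤ |gdens x t - gdens x s| * M :=
                mul_le_mul_of_nonneg_left (hfM x) (abs_nonneg _)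
            _ = M * |gdens x t - gdens x s| := mul_comm _ _
      _ = M * ∫ x in as..s, |gdens x t - gdens x s| :=
          intervalIntegral.integral_const_mul M _
      _ = M * (S1 + (S2 - (1-s) + S1)) := by rw [hAsum]
  -- T2 bound
  have hT2v : T2 ≤ M * ((1-t) - S2) := by
    have hval : (∫ x in s..t, gdens x t) = (1-t) - S2 := by
      rw [integral_gdens ht0.le (by linarith only [hs] : (-1:ℝ) ≤ s) hst.le, hS2d,
        show (1+t)^2 - 4*t = (1-t)^2 by ring, Real.sqrt_sq (by linarith only [ht1])]
    calc T2 ≤ ∫ x in s..t, M * gdens x t := by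
          apply intervalIntegral.integral_mono_on hst.le
            (hInt_gf t s t ht0.le (by linarith only [hs]) hst.le)
            ((intervalIntegrable_gdens ht0.le (by linarith only [hs]) hst.le).const_mul M)
          intro x hx
          have hg := gdens_nonneg t (show (-1:ℝ) ≤ x by linarith only [hx.1, hs])
          calc gdens x t * f x ≤ gdens x t * M := mul_le_mul_of_nonneg_left (hfM x) hg
            _ = M * gdens x t := mul_comm _ _
      _ = M * ((1-t) - S2) := by rw [intervalIntegral.integral_const_mul, hval]
  have hT20 : 0 ≤ T2 :=
    intervalIntegral.integral_nonneg hst.le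
      (fun x hx => mul_nonneg (gdens_nonneg t (by linarith only [hx.1, hs])) (hpos x))
  -- T3 bounds
  have hDs : ∀ x ∈ Set.Icc s t, 0 < (1+x)^2 - 4*s := by
    intro x hx
    have h2 : (1+s)*(1+s) ≤ (1+x)*(1+x) :=
      mul_self_le_mul_self (by linarith only [hs]) (by linarith only [hx.1])
    nlinarith only [h2, mul_pos (show (0:ℝ) < 1-s by linarith only [hs1])
      (show (0:ℝ) < 1-s by linarith only [hs1])]
  have hT30 : 0 ≤ W - V := by
    rw [hW, hV, ← intervalIntegral.integral_sub (hInt_gf s s t hs (by linarith only [hs]) hst.le)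
      (hIIf s t)]
    apply intervalIntegral.integral_nonneg hst.le
    intro x hx
    have h1 := one_le_gdens hs (show (-1:ℝ) ≤ x by linarith only [hx.1, hs]) (hDs x hx)
    nlinarith only [h1, hpos x]
  have hT3 : W - V ≤ M * (2 * Real.sqrt (t-s)) := by
    have hgsII := intervalIntegrable_gdens hs (show (-1:ℝ) ≤ s by linarith only [hs]) hst.le
    calc W - V = ∫ x in s..t, (gdens x s * f x - f x) := hWV.symm
      _ ≤ ∫ x in s..t, M * (gdens x s - 1) := by
          apply intervalIntegral.integral_mono_on hst.le
            ((hInt_gf s s t hs (by linarith only [hs]) hst.le).sub (hIIf s t))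
            ((hgsII.sub intervalIntegrable_const).const_mul M)
          intro x hx
          have h1 := one_le_gdens hs (by linarith only [hx.1, hs]) (hDs x hx)
          have h2 := hfM x
          have h3 := hpos x
          nlinarith only [h1, h2, h3]
      _ = M * ((Real.sqrt ((1+t)^2 - 4*s) - (1-s)) - (t-s)) := by
          rw [intervalIntegral.integral_const_mul]
          congr 1
          rw [intervalIntegral.integral_sub hgsII intervalIntegrable_const,
            integral_gdens hs (by linarith only [hs]) hst.le, intervalIntegral.integral_const]
          have h1s : Real.sqrt ((1+s)^2 - 4*s) = 1 - s := by
            rw [show (1+s)^2 - 4*s = (1-s)^2 by ring, Real.sqrt_sq (by linarith only [hs1])]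
          rw [h1s]
          simp [smul_eq_mul]
      _ ≤ M * (2 * Real.sqrt (t-s)) := by
          apply mul_le_mul_of_nonneg_left ?_ hM0
          have h2 := sqrt_sub_sqrt_le ((1+t)^2 - 4*s) ((1+s)^2 - 4*s)
          have h1s : Real.sqrt ((1+s)^2 - 4*s) = 1 - s := by
            rw [show (1+s)^2 - 4*s = (1-s)^2 by ring, Real.sqrt_sq (by linarith only [hs1])]
          have h3 : Real.sqrt ((1+t)^2 - 4*s - ((1+s)^2 - 4*s)) ≤ Real.sqrt (4*(t-s)) :=
            Real.sqrt_le_sqrt (by nlinarith only [mul_nonneg (show (0:ℝ) ≤ t-s by linarith only [hst]) (show (0:ℝ) ≤ 2-s-t by linarith only [hs1, ht1])])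
          rw [hsqrt4] at h3
          rw [h1s] at h2
          linarith only [h2, h3, hst.le]
  -- T4 bounds
  have hDt : ∀ x ∈ Set.Icc t 1, 0 < (1+x)^2 - 4*t := by
    intro x hx
    have h2 : (1+t)*(1+t) ≤ (1+x)*(1+x) :=
      mul_self_le_mul_self (by linarith only [ht0]) (by linarith only [hx.1])
    nlinarith only [h2, mul_pos (show (0:ℝ) < 1-t by linarith only [ht1])
      (show (0:ℝ) < 1-t by linarith only [ht1])]
  have hT4sub : Y1 - Y2 = ∫ x in t..(1:ℝ), (gdens x t * f x - gdens x s * f x) :=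
    (intervalIntegral.integral_sub (hInt_gf t t 1 ht0.le (by linarith only [ht0]) ht1.le)
      (hInt_gf s t 1 hs (by linarith only [ht0]) ht1.le)).symm
  have hT40 : 0 ≤ Y1 - Y2 := by
    rw [hT4sub]
    apply intervalIntegral.integral_nonneg ht1.le
    intro x hx
    have hmono := gdens_mono hst.le (show (-1:ℝ) ≤ x by linarith only [hx.1, ht0]) (hDt x hx)
    nlinarith only [hmono, hpos x]
  have hT4 : Y1 - Y2 ≤ M * (2*(t-s)/ε) := by
    have hgtII := intervalIntegrable_gdens ht0.le (show (-1:ℝ) ≤ t by linarith only [ht0]) ht1.le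
    have hgsII := intervalIntegrable_gdens hs (show (-1:ℝ) ≤ t by linarith only [ht0]) ht1.le
    have hstep : Y1 - Y2 ≤ M * ∫ x in t..(1:ℝ), (gdens x t - gdens x s) := by
      rw [hT4sub, ← intervalIntegral.integral_const_mul]
      apply intervalIntegral.integral_mono_on ht1.le
        ((hInt_gf t t 1 ht0.le (by linarith only [ht0]) ht1.le).sub
          (hInt_gf s t 1 hs (by linarith only [ht0]) ht1.le))
        ((hgtII.sub hgsII).const_mul M)
      intro x hx
      have hmono := gdens_mono hst.le (by linarith only [hx.1, ht0]) (hDt x hx)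
      have h2 := hfM x
      have h3 := hpos x
      nlinarith only [hmono, h2, h3]
    have hval : (∫ x in t..(1:ℝ), (gdens x t - gdens x s))
        = (Real.sqrt (4-4*t) - (1-t)) - (Real.sqrt (4-4*s) - Real.sqrt ((1+t)^2 - 4*s)) := by
      rw [intervalIntegral.integral_sub hgtII hgsII,
        integral_gdens ht0.le (by linarith only [ht0]) ht1.le,
        integral_gdens hs (by linarith only [ht0]) ht1.le]
      have e1 : ((1:ℝ)+1)^2 - 4*t = 4 - 4*t := by ring
      have e2 : ((1:ℝ)+1)^2 - 4*s = 4 - 4*s := by ring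
      have e3 : Real.sqrt ((1+t)^2 - 4*t) = 1 - t := by
        rw [show (1+t)^2 - 4*t = (1-t)^2 by ring, Real.sqrt_sq (by linarith only [ht1])]
      rw [e1, e2, e3]
    have hCle : (Real.sqrt (4-4*t) - (1-t)) - (Real.sqrt (4-4*s) - Real.sqrt ((1+t)^2 - 4*s))
        ≤ 2*(t-s)/ε := by
      have hm : Real.sqrt (4-4*t) ≤ Real.sqrt (4-4*s) := Real.sqrt_le_sqrt (by linarith only [hst])
      have harg : (1+t)^2 - 4*s = (1-t)^2 + 4*(t-s) := by ring
      have hApos : (0:ℝ) < (1-t)^2 := pow_pos (by linarith only [ht1]) 2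
      have hAd := sqrt_add_sub_sqrt_le hApos (by linarith only [hst] : (0:ℝ) ≤ 4*(t-s))
      rw [Real.sqrt_sq (by linarith only [ht1] : (0:ℝ) ≤ 1-t)] at hAd
      have hdd : 4*(t-s) / (2*(1-t)) ≤ 2*(t-s)/ε := by
        rw [div_le_div_iff₀ (by linarith only [ht1]) hε0]
        nlinarith only [mul_nonneg (show (0:ℝ) ≤ t-s by linarith only [hst]) (show (0:ℝ) ≤ 1-t-ε by linarith only [hεt])]
      have : Real.sqrt ((1+t)^2 - 4*s) - (1-t) ≤ 2*(t-s)/ε := by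
        rw [harg]
        linarith only [hAd, hdd]
      linarith only [hm, this]
    calc Y1 - Y2 ≤ M * ∫ x in t..(1:ℝ), (gdens x t - gdens x s) := hstep
      _ ≤ M * (2*(t-s)/ε) := by
          apply mul_le_mul_of_nonneg_left ?_ hM0
          rw [hval]
          exact hCle
  -- epsilon facts
  set cep := ε ^ (-(3:ℝ)/2) with hcep
  have hce : ε⁻¹ ≤ cep := by
    have h1 : ε ^ (-(1:ℝ)) ≤ ε ^ (-(3:ℝ)/2) :=
      (Real.rpow_le_rpow_left_iff_of_base_lt_one hε0 hε1).mpr (by norm_num)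
    rw [Real.rpow_neg_one] at h1
    exact h1
  have hc1 : 1 ≤ cep := by
    have h1 : ε ^ (0:ℝ) ≤ ε ^ (-(3:ℝ)/2) :=
      (Real.rpow_le_rpow_left_iff_of_base_lt_one hε0 hε1).mpr (by norm_num)
    rw [Real.rpow_zero] at h1
    exact h1
  have hsts : Real.sqrt (t-s) * Real.sqrt (t-s) = t - s :=
    Real.mul_self_sqrt (by linarith only [hst])
  have hsqle1 : Real.sqrt (t-s) ≤ 1 := by
    rw [show (1:ℝ) = Real.sqrt 1 by simp]
    exact Real.sqrt_le_sqrt (by linarith only [hs, ht, hε0])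
  have hT4' : M * (2*(t-s)/ε) ≤ 2 * cep * (M * Real.sqrt (t-s)) := by
    have h1 : 2*(t-s)/ε ≤ 2*cep*Real.sqrt (t-s) := by
      rw [div_eq_mul_inv]
      have h2 : t - s ≤ Real.sqrt (t-s) := by nlinarith only [hsts, hsqle1, hsq0]
      have h4 : 2*(t-s)*ε⁻¹ ≤ 2*Real.sqrt (t-s)*ε⁻¹ :=
        mul_le_mul_of_nonneg_right (by linarith only [h2]) (inv_nonneg.mpr hε0.le)
      have h5 : 2*Real.sqrt (t-s)*ε⁻¹ ≤ 2*Real.sqrt (t-s)*cep :=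
        mul_le_mul_of_nonneg_left hce (by positivity)
      calc 2*(t-s)*ε⁻¹ ≤ 2*Real.sqrt (t-s)*cep := by linarith only [h4, h5]
        _ = 2*cep*Real.sqrt (t-s) := by ring
    calc M * (2*(t-s)/ε) ≤ M * (2*cep*Real.sqrt (t-s)) :=
          mul_le_mul_of_nonneg_left h1 hM0
      _ = 2 * cep * (M * Real.sqrt (t-s)) := by ring
  -- final assembly
  set P := M * Real.sqrt (t-s) with hP
  have hP0 : 0 ≤ P := mul_nonneg hM0 hsq0
  have hPQ : P ≤ cep * P := by nlinarith only [hc1, hP0]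
  have hBnn : 0 ≤ (1-t) - S2 := by linarith only [hS2le]
  have hMB0 : 0 ≤ M * ((1-t) - S2) := mul_nonneg hM0 hBnn
  have hABsum : (S1 + (S2 - (1-s) + S1)) + ((1-t) - S2) ≤ 4 * Real.sqrt (t-s) := by
    linarith only [hS1le, hst.le]
  have hMA : M * (S1 + (S2 - (1-s) + S1)) + M * ((1-t) - S2) ≤ 4 * P := by
    have h1 := mul_le_mul_of_nonneg_left hABsum hM0
    rw [hP]
    nlinarith only [h1]
  have hMA4 : M * (S1 + (S2 - (1-s) + S1)) ≤ 4 * P := by linarith only [hMA, hMB0]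
  have hT3P : W - V ≤ 2 * P := by
    have : M * (2*Real.sqrt (t-s)) = 2*P := by rw [hP]; ring
    linarith only [hT3, this]
  have hT4P : Y1 - Y2 ≤ 2 * (cep * P) := by
    have h1 := hT4.trans hT4'
    linarith only [h1]
  have habsT1 := abs_le.mp hT1
  have hRHS : (9 + 6*cep) * M * Real.sqrt (t-s) = 9*P + 6*(cep*P) := by rw [hP]; ring
  rw [abs_le]
  constructor
  · rw [hsplit, hRHS]
    linarith only [habsT1.1, hMA4, hT20, hT30, hT40, hT3P, hPQ, hP0]
  · rw [hsplit, hRHS]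
    linarith only [habsT1.2, hMA, hT2v, hT30, hT4P, hPQ, hP0]
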